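/- Let u_1, ..., u_n be unit vectors in ℝ^d (n ≥ d ≥ 2) and let k satisfy 3 ≤ k ≤ n. Then there exist k vectors among ±u_1, ..., ±u_n (with distinct underlying indices) whose sum has Euclidean norm at least k − 8·k^{(d+1)/(d−1)}·n^{−2/(d−1)}. -/

import Mathlib

open MeasureTheory Metric Finset
open scoped ENNReal NNReal

lemma pi_ball_vol (m : ℕ) {ρ : ℝ} (hρ : 0 ≤ ρ) :
    volume {y : Fin m → ℝ | ∑ j, y j ^ 2 ≤ ρ ^ 2}
      = ENNReal.ofReal (ρ ^ m) * volume (ball (0 : EuclideanSpace ℝ (Fin m)) 1) := by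
  have e := EuclideanSpace.volume_preserving_symm_measurableEquiv_toLp (Fin m)
  have hmeas : MeasurableSet {y : Fin m → ℝ | ∑ j, y j ^ 2 ≤ ρ ^ 2} := by
    apply measurableSet_le (by fun_prop) measurable_const
  have hpre : (MeasurableEquiv.toLp 2 (Fin m → ℝ)).symm ⁻¹' {y : Fin m → ℝ | ∑ j, y j ^ 2 ≤ ρ ^ 2}
      = closedBall (0 : EuclideanSpace ℝ (Fin m)) ρ := by
    ext x
    simp only [Set.mem_preimage, Set.mem_setOf_eq, mem_closedBall, dist_zero_right,
      EuclideanSpace.norm_eq, Real.norm_eq_abs, sq_abs]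
    rw [show (MeasurableEquiv.toLp 2 (Fin m → ℝ)).symm x = x.ofLp from rfl]
    constructor
    · intro h
      calc √(∑ i, x i ^ 2) ≤ √(ρ ^ 2) := Real.sqrt_le_sqrt h
        _ = ρ := Real.sqrt_sq hρ
    · intro h
      have h2 : ∑ i, x i ^ 2 = (√(∑ i, x i ^ 2)) ^ 2 := (Real.sq_sqrt (by positivity)).symm
      rw [h2]
      exact pow_le_pow_left₀ (Real.sqrt_nonneg _) h 2
  rw [← e.measure_preimage hmeas.nullMeasurableSet, hpre,
    Measure.addHaar_closedBall _ _ hρ, finrank_euclideanSpace_fin]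

lemma slab_volume (m : ℕ) {a b ρ : ℝ} (hρ : 0 ≤ ρ) :
    volume {x : EuclideanSpace ℝ (Fin (m + 1)) |
        (a ≤ x 0 ∧ x 0 ≤ b) ∧ ∑ j : Fin m, x j.succ ^ 2 ≤ ρ ^ 2}
      = ENNReal.ofReal (b - a) * ENNReal.ofReal (ρ ^ m)
        * volume (ball (0 : EuclideanSpace ℝ (Fin m)) 1) := by
  set S : Set (EuclideanSpace ℝ (Fin (m+1))) := {x |
      (a ≤ x 0 ∧ x 0 ≤ b) ∧ ∑ j : Fin m, x j.succ ^ 2 ≤ ρ ^ 2}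
  set T : Set (Fin (m+1) → ℝ) := {y | (a ≤ y 0 ∧ y 0 ≤ b) ∧ ∑ j : Fin m, y j.succ ^ 2 ≤ ρ ^ 2}
  have hTmeas : MeasurableSet T := by
    apply MeasurableSet.inter
    · exact MeasurableSet.inter
        (measurableSet_le measurable_const (measurable_pi_apply 0))
        (measurableSet_le (measurable_pi_apply 0) measurable_const)
    · show MeasurableSet {y : Fin (m+1) → ℝ | ∑ j : Fin m, y j.succ ^ 2 ≤ ρ ^ 2}
      exact measurableSet_le
        (Finset.measurable_sum _ (fun (j : Fin m) _ => ((measurable_pi_apply j.succ).pow_const 2)))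
        measurable_const
  have e := EuclideanSpace.volume_preserving_symm_measurableEquiv_toLp (Fin (m+1))
  have hpre : (MeasurableEquiv.toLp 2 (Fin (m+1) → ℝ)).symm ⁻¹' T = S := rfl
  have h1 : volume S = volume T := by
    rw [← hpre]; exact e.measure_preimage hTmeas.nullMeasurableSet
  have e2 := measurePreserving_piFinSuccAbove (fun _ : Fin (m+1) => (volume : Measure ℝ)) 0
  have hpre2 : (MeasurableEquiv.piFinSuccAbove (fun _ : Fin (m+1) => ℝ) 0) ⁻¹'
      ((Set.Icc a b) ×ˢ {z : Fin m → ℝ | ∑ j, z j ^ 2 ≤ ρ ^ 2}) = T := by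
    ext y
    simp only [MeasurableEquiv.piFinSuccAbove_apply, Set.mem_preimage, Set.mem_prod,
      Set.mem_Icc, Set.mem_setOf_eq, Fin.insertNthEquiv_symm_apply, Fin.removeNth_zero]
    rfl
  have h2 : volume T = (volume : Measure ℝ).prod (volume : Measure (Fin m → ℝ))
      ((Set.Icc a b) ×ˢ {z : Fin m → ℝ | ∑ j, z j ^ 2 ≤ ρ ^ 2}) := by
    rw [← hpre2]
    have hms : MeasurableSet ((Set.Icc a b) ×ˢ {z : Fin m → ℝ | ∑ j, z j ^ 2 ≤ ρ ^ 2}) := by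
      apply measurableSet_Icc.prod
      show MeasurableSet {z : Fin m → ℝ | ∑ j : Fin m, z j ^ 2 ≤ ρ ^ 2}
      exact measurableSet_le
        (Finset.measurable_sum _ (fun (j : Fin m) _ => ((measurable_pi_apply j).pow_const 2)))
        measurable_const
    have := e2.measure_preimage hms.nullMeasurableSet
    rw [volume_pi, this, volume_pi]
  rw [h1, h2, Measure.prod_prod, Real.volume_Icc, pi_ball_vol m hρ, mul_assoc]

lemma norm_sq_split (m : ℕ) (x : EuclideanSpace ℝ (Fin (m + 1))) :
    ‖x‖ ^ 2 = x 0 ^ 2 + ∑ j : Fin m, x j.succ ^ 2 := by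
  have h : ‖x‖ ^ 2 = ∑ i : Fin (m+1), x i ^ 2 := by
    rw [EuclideanSpace.norm_eq, Real.sq_sqrt (by positivity)]
    simp [sq_abs]
  rw [h, Fin.sum_univ_succ]

lemma cylinder_bound (m : ℕ) :
    volume (closedBall (0 : EuclideanSpace ℝ (Fin (m + 1))) 1)
      ≤ ENNReal.ofReal 2 * volume (ball (0 : EuclideanSpace ℝ (Fin m)) 1) := by
  have hsub : closedBall (0 : EuclideanSpace ℝ (Fin (m + 1))) 1 ⊆
      {x : EuclideanSpace ℝ (Fin (m + 1)) |
        ((-1:ℝ) ≤ x 0 ∧ x 0 ≤ 1) ∧ ∑ j : Fin m, x j.succ ^ 2 ≤ (1:ℝ) ^ 2} := by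
    intro x hx
    rw [mem_closedBall, dist_zero_right] at hx
    have h2 := norm_sq_split m x
    have hnn : (0:ℝ) ≤ ∑ j : Fin m, x j.succ ^ 2 := by positivity
    have hn2 : ‖x‖ ^ 2 ≤ 1 := by nlinarith [norm_nonneg x]
    have hx0 : x 0 ^ 2 ≤ 1 := by nlinarith
    refine ⟨⟨by nlinarith [sq_nonneg (x 0 + 1)], by nlinarith [sq_nonneg (x 0 - 1)]⟩, by nlinarith⟩
  calc volume (closedBall (0 : EuclideanSpace ℝ (Fin (m + 1))) 1)
      ≤ volume {x : EuclideanSpace ℝ (Fin (m + 1)) |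
        ((-1:ℝ) ≤ x 0 ∧ x 0 ≤ 1) ∧ ∑ j : Fin m, x j.succ ^ 2 ≤ (1:ℝ) ^ 2} :=
        measure_mono hsub
    _ = ENNReal.ofReal (1 - (-1)) * ENNReal.ofReal ((1:ℝ) ^ m)
        * volume (ball (0 : EuclideanSpace ℝ (Fin m)) 1) := slab_volume m (by norm_num)
    _ = ENNReal.ofReal 2 * volume (ball (0 : EuclideanSpace ℝ (Fin m)) 1) := by norm_num

lemma cone_contains_slab (m : ℕ) {c : ℝ} (hc : 0 < c) (hc1 : c < 1) :
    {x : EuclideanSpace ℝ (Fin (m + 1)) |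
        (c / 2 ≤ x 0 ∧ x 0 ≤ Real.sqrt (3 + c^2) / 2) ∧
          ∑ j : Fin m, x j.succ ^ 2 ≤ (Real.sqrt (1 - c^2) / 2) ^ 2}
      ⊆ {x : EuclideanSpace ℝ (Fin (m + 1)) | c * ‖x‖ ≤ x 0 ∧ ‖x‖ ≤ 1} := by
  intro x ⟨⟨h1, h2⟩, h3⟩
  have hρ2 : (Real.sqrt (1 - c^2) / 2) ^ 2 = (1 - c^2) / 4 := by
    rw [div_pow, Real.sq_sqrt (by nlinarith)]; ring
  have hb2 : (Real.sqrt (3 + c^2) / 2) ^ 2 = (3 + c^2) / 4 := by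
    rw [div_pow, Real.sq_sqrt (by nlinarith)]; ring
  rw [hρ2] at h3
  have hsplit := norm_sq_split m x
  have hx0nn : 0 ≤ x 0 := by linarith
  have hx2 : ‖x‖ ^ 2 ≤ 1 := by nlinarith [Real.sqrt_nonneg (3 + c^2)]
  have hnx : ‖x‖ ≤ 1 := by nlinarith [norm_nonneg x]
  refine ⟨?_, hnx⟩
  -- c * ‖x‖ ≤ x 0
  have hx0sq : c ^ 2 / 4 ≤ x 0 ^ 2 := by nlinarith
  have ht1 : c ^ 2 * (∑ j : Fin m, x j.succ ^ 2) ≤ c ^ 2 * ((1 - c ^ 2) / 4) :=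
    mul_le_mul_of_nonneg_left h3 (sq_nonneg c)
  have ht2 : (1 - c ^ 2) * (c ^ 2 / 4) ≤ (1 - c ^ 2) * x 0 ^ 2 :=
    mul_le_mul_of_nonneg_left hx0sq (by nlinarith)
  have hsq : (c * ‖x‖) ^ 2 ≤ x 0 ^ 2 := by nlinarith
  have h5 := Real.sqrt_le_sqrt hsq
  rwa [Real.sqrt_sq (mul_nonneg hc.le (norm_nonneg x)), Real.sqrt_sq hx0nn] at h5

lemma key_poly {c : ℝ} (hc : 0 ≤ c) (hc1 : c ≤ 1) :
    2 ≤ (Real.sqrt (3 + c^2) - c) * Real.sqrt (2 + 2*c) := by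
  set A := Real.sqrt (3 + c^2) with hA
  set B := Real.sqrt (2 + 2*c) with hB
  have hA2 : A ^ 2 = 3 + c^2 := Real.sq_sqrt (by positivity)
  have hB2 : B ^ 2 = 2 + 2*c := Real.sq_sqrt (by positivity)
  have hA0 : 0 ≤ A := Real.sqrt_nonneg _
  have hB0 : 0 ≤ B := Real.sqrt_nonneg _
  have hAc : c ≤ A := by nlinarith
  have hQ : 0 ≤ (1+c)*(3+2*c^2) - 2 := by nlinarith
  have hP : (2*c*(1+c))^2*(3+c^2) ≤ ((1+c)*(3+2*c^2)-2)^2 := by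
    nlinarith [mul_nonneg (sub_nonneg.2 hc1) (by positivity : (0:ℝ) ≤ 8*c^2+7*c+1)]
  have hcA : 2*c*(1+c)*A ≤ (1+c)*(3+2*c^2)-2 := by
    have h1 : (2*c*(1+c)*A)^2 ≤ ((1+c)*(3+2*c^2)-2)^2 := by nlinarith
    have h2 := Real.sqrt_le_sqrt h1
    rwa [Real.sqrt_sq (by positivity), Real.sqrt_sq hQ] at h2
  have hexp : ((A - c)*B)^2 = (3 + 2*c^2 - 2*c*A) * (2 + 2*c) := by
    have h4 : ((A-c)*B)^2 = (A^2 - 2*c*A + c^2)*B^2 := by ring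
    rw [h4, hA2, hB2]; ring
  have hfin : 4 ≤ ((A - c)*B)^2 := by nlinarith [hexp, hcA]
  have h3 := Real.sqrt_le_sqrt hfin
  rwa [show (4:ℝ) = 2^2 by norm_num, Real.sqrt_sq (by norm_num),
    Real.sqrt_sq (mul_nonneg (by linarith) hB0)] at h3

lemma key_ineq (m : ℕ) {c s : ℝ} (hs : 0 ≤ s) (hc : 0 ≤ c) (hc1 : c ≤ 1)
    (hcs : 1 - c = 8 * s^2) :
    s ^ (m+1) ≤ (Real.sqrt (3 + c^2) - c) / 2 * (Real.sqrt (1 - c^2) / 2) ^ (m+1) := by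
  have hρ : Real.sqrt (1 - c^2) / 2 = s * Real.sqrt (2 + 2*c) := by
    have h1 : 1 - c^2 = s^2 * (8 + 8*c) := by nlinarith
    rw [h1, Real.sqrt_mul (sq_nonneg s), Real.sqrt_sq hs,
      show (8 + 8*c : ℝ) = 4 * (2 + 2*c) by ring,
      Real.sqrt_mul (by norm_num : (0:ℝ) ≤ 4),
      show Real.sqrt 4 = 2 by
        rw [show (4:ℝ) = 2^2 by norm_num, Real.sqrt_sq (by norm_num)]]
    ring
  rw [hρ, mul_pow]
  have hgoal : 1 ≤ (Real.sqrt (3 + c^2) - c) / 2 * Real.sqrt (2 + 2*c) ^ (m+1) := by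
    rcases Nat.eq_zero_or_pos m with hm | hm
    · subst hm
      have := key_poly hc hc1
      simpa [pow_one] using by linarith
    · have h2 : (1:ℝ) ≤ Real.sqrt (3 + c^2) - c := by
        have hA2 : Real.sqrt (3 + c^2) ^ 2 = 3 + c^2 := Real.sq_sqrt (by positivity)
        nlinarith [Real.sqrt_nonneg (3 + c^2)]
      have h3 : (2:ℝ) ≤ Real.sqrt (2 + 2*c) ^ (m+1) := by
        have hs2 : Real.sqrt 2 ≤ Real.sqrt (2 + 2*c) := Real.sqrt_le_sqrt (by linarith)
        have h1s : (1:ℝ) ≤ Real.sqrt 2 := by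
          nlinarith [Real.sq_sqrt (by norm_num : (0:ℝ) ≤ 2), Real.sqrt_nonneg 2]
        calc (2:ℝ) = Real.sqrt 2 ^ 2 := (Real.sq_sqrt (by norm_num)).symm
          _ ≤ Real.sqrt (2 + 2*c) ^ 2 := by
              exact pow_le_pow_left₀ (Real.sqrt_nonneg 2) hs2 2
          _ ≤ Real.sqrt (2 + 2*c) ^ (m+1) := by
              apply pow_le_pow_right₀ (le_trans h1s hs2)
              omega
      calc (1:ℝ) = (1/2) * 2 := by norm_num
        _ ≤ (Real.sqrt (3 + c^2) - c) / 2 * Real.sqrt (2 + 2*c) ^ (m+1) := by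
            apply mul_le_mul (by linarith) h3 (by norm_num)
            linarith
  calc s ^ (m+1) = s ^ (m+1) * 1 := by ring
    _ ≤ s ^ (m+1) * ((Real.sqrt (3 + c^2) - c) / 2 * Real.sqrt (2 + 2*c) ^ (m+1)) := by
        apply mul_le_mul_of_nonneg_left hgoal (by positivity)
    _ = (Real.sqrt (3 + c^2) - c) / 2 * (s ^ (m+1) * Real.sqrt (2 + 2*c) ^ (m+1)) := by ring

noncomputable def coneSet (m : ℕ) (c : ℝ) (v : EuclideanSpace ℝ (Fin (m+2))) :
    Set (EuclideanSpace ℝ (Fin (m+2))) :=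
  {x | c * ‖x‖ ≤ inner ℝ v x ∧ ‖x‖ ≤ 1}

lemma coneSet_closed {m : ℕ} (c : ℝ) (v : EuclideanSpace ℝ (Fin (m+2))) :
    IsClosed (coneSet m c v) := by
  apply IsClosed.inter
  · exact isClosed_le (continuous_const.mul continuous_norm)
      (Continuous.inner continuous_const continuous_id)
  · exact isClosed_le continuous_norm continuous_const

lemma coneSet_vol_eq {m : ℕ} (c : ℝ) {v : EuclideanSpace ℝ (Fin (m+2))} (hv : ‖v‖ = 1) :
    volume (coneSet m c v)
      = volume (coneSet m c (EuclideanSpace.single (0 : Fin (m+2)) (1:ℝ))) := by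
  set e₀ : EuclideanSpace ℝ (Fin (m+2)) := EuclideanSpace.single (0 : Fin (m+2)) (1:ℝ) with he₀
  have he : ‖e₀‖ = 1 := by simp [he₀, EuclideanSpace.norm_single]
  set R := Submodule.reflection (Submodule.span ℝ {v - e₀})ᗮ with hR
  have hRv : R v = e₀ := Submodule.reflection_sub (by rw [hv, he])
  have hpre : (R : EuclideanSpace ℝ (Fin (m+2)) → EuclideanSpace ℝ (Fin (m+2))) ⁻¹'
      (coneSet m c e₀) = coneSet m c v := by
    ext x
    simp only [Set.mem_preimage, coneSet, Set.mem_setOf_eq]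
    rw [R.norm_map, ← hRv, LinearIsometryEquiv.inner_map_map]
  rw [← hpre]
  exact R.measurePreserving.measure_preimage
    (coneSet_closed c e₀).measurableSet.nullMeasurableSet

lemma coneSet_vol_lower {m : ℕ} {c : ℝ} (hc : 0 < c) (hc1 : c < 1)
    {v : EuclideanSpace ℝ (Fin (m+2))} (hv : ‖v‖ = 1) :
    ENNReal.ofReal ((Real.sqrt (3 + c^2) - c) / 2 * (Real.sqrt (1 - c^2) / 2) ^ (m+1))
        * volume (ball (0 : EuclideanSpace ℝ (Fin (m+1))) 1)
      ≤ volume (coneSet m c v) := by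
  rw [coneSet_vol_eq c hv]
  have hsub : {x : EuclideanSpace ℝ (Fin (m + 2)) |
        (c / 2 ≤ x 0 ∧ x 0 ≤ Real.sqrt (3 + c^2) / 2) ∧
          ∑ j : Fin (m+1), x j.succ ^ 2 ≤ (Real.sqrt (1 - c^2) / 2) ^ 2}
      ⊆ coneSet m c (EuclideanSpace.single (0 : Fin (m+2)) (1:ℝ)) := by
    intro x hx
    have h := cone_contains_slab (m+1) hc hc1 hx
    simp only [Set.mem_setOf_eq] at h
    constructor
    · rw [show (inner ℝ (EuclideanSpace.single (0 : Fin (m+2)) (1:ℝ)) x : ℝ) = x 0 by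
        rw [EuclideanSpace.inner_single_left]; simp]
      exact h.1
    · exact h.2
  calc ENNReal.ofReal ((Real.sqrt (3 + c^2) - c) / 2 * (Real.sqrt (1 - c^2) / 2) ^ (m+1))
        * volume (ball (0 : EuclideanSpace ℝ (Fin (m+1))) 1)
      = ENNReal.ofReal (Real.sqrt (3 + c^2) / 2 - c / 2)
        * ENNReal.ofReal ((Real.sqrt (1 - c^2) / 2) ^ (m+1))
        * volume (ball (0 : EuclideanSpace ℝ (Fin (m+1))) 1) := by
        have hcA : 0 ≤ (Real.sqrt (3 + c^2) - c) / 2 := by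
          nlinarith [Real.sq_sqrt (show (0:ℝ) ≤ 3+c^2 by positivity),
            Real.sqrt_nonneg (3+c^2), hc.le]
        rw [show √(3 + c ^ 2) / 2 - c / 2 = (√(3 + c ^ 2) - c) / 2 by ring, ← ENNReal.ofReal_mul hcA]
    _ = volume {x : EuclideanSpace ℝ (Fin (m + 2)) |
        (c / 2 ≤ x 0 ∧ x 0 ≤ Real.sqrt (3 + c^2) / 2) ∧
          ∑ j : Fin (m+1), x j.succ ^ 2 ≤ (Real.sqrt (1 - c^2) / 2) ^ 2} :=
        (slab_volume (m+1) (by positivity)).symm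
    _ ≤ _ := measure_mono hsub

lemma exists_heavy_direction (m n k : ℕ) (hk : 1 ≤ k) (hkn : k ≤ n)
    (u : Fin n → EuclideanSpace ℝ (Fin (m+2))) (hu : ∀ i, ‖u i‖ = 1)
    {c s : ℝ} (hc : 0 < c) (hc1 : c < 1) (hs : 0 ≤ s) (hcs : 1 - c = 8 * s^2)
    (hsk : (k : ℝ) ≤ n * s ^ (m+1)) :
    ∃ x : EuclideanSpace ℝ (Fin (m+2)), x ≠ 0 ∧
      ∃ T : Finset (Fin n), k ≤ T.card ∧ ∀ i ∈ T, c * ‖x‖ ≤ |(inner ℝ (u i) x : ℝ)| := by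
  classical
  set V := volume (ball (0 : EuclideanSpace ℝ (Fin (m+1))) 1) with hV
  have hVfin : V ≠ ⊤ := measure_ball_lt_top.ne
  set B := closedBall (0 : EuclideanSpace ℝ (Fin (m+2))) 1 with hB
  set A : Fin n → Set (EuclideanSpace ℝ (Fin (m+2))) := fun i => {x | c * ‖x‖ ≤ |(inner ℝ (u i) x : ℝ)|} with hA
  have hAmeas : ∀ i, MeasurableSet (A i) := by
    intro i
    apply IsClosed.measurableSet
    exact isClosed_le (continuous_const.mul continuous_norm)
      ((Continuous.inner continuous_const continuous_id)).abs
  have hABsub : ∀ i, coneSet m c (u i) ∪ coneSet m c (-(u i)) ⊆ A i ∩ B := by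
    intro i x hx
    rcases hx with hx | hx
    · exact ⟨le_trans hx.1 (le_abs_self _), by simpa [hB] using hx.2⟩
    · refine ⟨le_trans hx.1 ?_, by simpa [hB] using hx.2⟩
      rw [inner_neg_left]
      exact neg_le_abs _
  have hInter : ∀ i, volume (coneSet m c (u i) ∩ coneSet m c (-(u i))) = 0 := by
    intro i
    have hsub : coneSet m c (u i) ∩ coneSet m c (-(u i)) ⊆ {0} := by
      intro x ⟨hx1, hx2⟩
      have h2 : c * ‖x‖ ≤ -(inner ℝ (u i) x : ℝ) := by
        simpa [inner_neg_left] using hx2.1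
      have : ‖x‖ ≤ 0 := by nlinarith [hx1.1, norm_nonneg x, hc]
      have hx0 : ‖x‖ = 0 := le_antisymm this (norm_nonneg x)
      simpa using norm_eq_zero.1 hx0
    exact measure_mono_null hsub (measure_singleton 0)
  set W := ENNReal.ofReal ((Real.sqrt (3 + c^2) - c) / 2 * (Real.sqrt (1 - c^2) / 2) ^ (m+1))
      * V with hW
  have hconeA : ∀ i, 2 * W ≤ volume (A i ∩ B) := by
    intro i
    have h1 := coneSet_vol_lower hc hc1 (hu i)
    have h2 : ‖-(u i)‖ = 1 := by rw [norm_neg]; exact hu i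
    have h3 := coneSet_vol_lower hc hc1 h2
    calc 2 * W = W + W := two_mul W
      _ ≤ volume (coneSet m c (u i)) + volume (coneSet m c (-(u i))) := add_le_add h1 h3
      _ = volume (coneSet m c (u i) ∪ coneSet m c (-(u i)))
          + volume (coneSet m c (u i) ∩ coneSet m c (-(u i))) :=
          (measure_union_add_inter _ (coneSet_closed c (-(u i))).measurableSet).symm
      _ = volume (coneSet m c (u i) ∪ coneSet m c (-(u i))) := by rw [hInter i, add_zero]
      _ ≤ volume (A i ∩ B) := measure_mono (hABsub i)
  -- counting function
  set N : EuclideanSpace ℝ (Fin (m+2)) → ℕ := fun x => (univ.filter (fun i => x ∈ A i)).card with hN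
  have hint : ∫⁻ x in B, (N x : ℝ≥0∞) = ∑ i, volume (A i ∩ B) := by
    have h1 : ∀ x, ((N x : ℝ≥0∞)) = ∑ i, (A i).indicator (fun _ => (1:ℝ≥0∞)) x := by
      intro x
      rw [hN]
      push_cast
      rw [Finset.card_filter]
      push_cast
      apply Finset.sum_congr rfl
      intro i _
      by_cases h : x ∈ A i <;> simp [h]
    simp_rw [h1]
    rw [lintegral_finset_sum (f := fun i => (A i).indicator (fun _ => (1:ℝ≥0∞))) univ
      (fun i _ => (measurable_const.indicator (hAmeas i)))]
    apply Finset.sum_congr rfl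
    intro i _
    rw [lintegral_indicator (hAmeas i), setLIntegral_one, Measure.restrict_apply (hAmeas i)]
  have hlow : (k:ℝ≥0∞) * volume B ≤ ∫⁻ x in B, (N x : ℝ≥0∞) := by
    rw [hint]
    have hsr : (2*k:ℝ) ≤ 2*n*((Real.sqrt (3 + c^2) - c) / 2 * (Real.sqrt (1 - c^2) / 2) ^ (m+1)) := by
      have h1 := key_ineq m hs hc.le hc1.le hcs
      have h2 : (n:ℝ) * s^(m+1) ≤ n * ((Real.sqrt (3 + c^2) - c) / 2 * (Real.sqrt (1 - c^2) / 2) ^ (m+1)) :=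
        mul_le_mul_of_nonneg_left h1 (Nat.cast_nonneg n)
      nlinarith [le_trans hsk h2]
    calc (k:ℝ≥0∞) * volume B ≤ (k:ℝ≥0∞) * (ENNReal.ofReal 2 * V) := by
          gcongr; exact cylinder_bound (m+1)
      _ = ENNReal.ofReal (2*k) * V := by
          rw [← mul_assoc, ← ENNReal.ofReal_natCast k, ← ENNReal.ofReal_mul (by positivity)]
          ring_nf
      _ ≤ ENNReal.ofReal (2*n*((Real.sqrt (3 + c^2) - c) / 2 * (Real.sqrt (1 - c^2) / 2) ^ (m+1))) * V :=
          by gcongr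
      _ = (n : ℝ≥0∞) * (2 * W) := by
          rw [hW, show (2*n*((Real.sqrt (3 + c^2) - c) / 2 * (Real.sqrt (1 - c^2) / 2) ^ (m+1)) : ℝ)
              = (n:ℝ) * (2 * ((Real.sqrt (3 + c^2) - c) / 2 * (Real.sqrt (1 - c^2) / 2) ^ (m+1))) by ring,
            ENNReal.ofReal_mul (Nat.cast_nonneg n), ENNReal.ofReal_mul (by norm_num),
            ENNReal.ofReal_natCast, ENNReal.ofReal_ofNat]
          ring
      _ = ∑ _i : Fin n, 2 * W := by rw [Finset.sum_const, card_univ, Fintype.card_fin, nsmul_eq_mul]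
      _ ≤ ∑ i, volume (A i ∩ B) := Finset.sum_le_sum (fun i _ => hconeA i)
  have hBpos : volume B ≠ 0 := by
    intro h
    exact ((measure_ball_pos volume (0 : EuclideanSpace ℝ (Fin (m+2))) one_pos).ne'
      (le_antisymm (le_trans (measure_mono ball_subset_closedBall) h.le) zero_le))
  have hBfin : volume B ≠ ⊤ := measure_closedBall_lt_top.ne
  set G : Set (EuclideanSpace ℝ (Fin (m+2))) := {x | k ≤ N x} with hG
  have hGpos : volume G ≠ 0 := by
    intro h0
    have hae : ∀ᵐ x : EuclideanSpace ℝ (Fin (m+2)), x ∉ G := by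
      rw [ae_iff]
      simpa [not_not] using h0
    have hbound : ∫⁻ x in B, (N x : ℝ≥0∞) ≤ ((k-1 : ℕ) : ℝ≥0∞) * volume B := by
      have h2 : ∫⁻ x in B, (N x : ℝ≥0∞) ≤ ∫⁻ _x in B, ((k-1:ℕ) : ℝ≥0∞) := by
        apply lintegral_mono_ae
        apply ae_restrict_of_ae
        filter_upwards [hae] with x hx
        have : N x ≤ k - 1 := by
          simp only [hG, Set.mem_setOf_eq, not_le] at hx
          omega
        exact_mod_cast Nat.cast_le.2 this
      simpa [setLIntegral_const] using h2
    have hc2 : (k:ℝ≥0∞) * volume B ≤ ((k-1:ℕ) : ℝ≥0∞) * volume B := le_trans hlow hbound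
    have hk' : (k:ℝ≥0∞) ≤ ((k-1:ℕ) : ℝ≥0∞) := by
      exact (ENNReal.mul_le_mul_iff_left hBpos hBfin).1 hc2
    have : k ≤ k - 1 := by exact_mod_cast hk'
    omega
  have hGne : (G \ {0}).Nonempty := by
    apply nonempty_of_measure_ne_zero (μ := volume)
    rw [measure_diff_null (measure_singleton 0)]
    exact hGpos
  obtain ⟨x, hxG, hx0⟩ := hGne
  refine ⟨x, by simpa using hx0, univ.filter (fun i => x ∈ A i), hxG, ?_⟩
  intro i hi
  exact (mem_filter.1 hi).2

theorem stmt_19 (d n k : ℕ) (hd : 2 ≤ d) (hn : d ≤ n) (hk3 : 3 ≤ k) (hkn : k ≤ n)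
    (u : Fin n → EuclideanSpace ℝ (Fin d)) (hu : ∀ i, ‖u i‖ = 1) :
    ∃ (s : Fin k → Fin n) (ε : Fin k → ℝ),
      Function.Injective s ∧ (∀ i, ε i = 1 ∨ ε i = -1) ∧
      ‖∑ i, ε i • u (s i)‖ ≥
        (k : ℝ) - 8 * (k : ℝ) ^ (((d : ℝ) + 1) / ((d : ℝ) - 1)) *
          (n : ℝ) ^ (-(2 : ℝ) / ((d : ℝ) - 1)) := by
  classical
  obtain ⟨m, rfl⟩ : ∃ m, d = m + 2 := ⟨d - 2, by omega⟩
  have hn0 : 0 < n := by omega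
  have hk0 : 0 < k := by omega
  have hknR : (0:ℝ) < (k:ℝ)/n := by positivity
  set s : ℝ := ((k:ℝ)/n) ^ ((1:ℝ)/((m:ℝ)+1)) with hsdef
  have hs0 : 0 < s := Real.rpow_pos_of_pos hknR _
  have hm1 : ((m:ℝ)+1) ≠ 0 := by positivity
  have hspow : s ^ (m+1) = (k:ℝ)/n := by
    rw [hsdef, ← Real.rpow_natCast (((k:ℝ)/n) ^ ((1:ℝ)/((m:ℝ)+1))) (m+1),
      ← Real.rpow_mul hknR.le]
    push_cast
    rw [one_div, inv_mul_cancel₀ hm1, Real.rpow_one]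
  set c : ℝ := 1 - 8 * s^2 with hcdef
  have hd1 : ((m+2:ℕ):ℝ) - 1 = (m:ℝ) + 1 := by push_cast; ring
  have hs2 : s ^ 2 = (k:ℝ) ^ ((2:ℝ)/((m:ℝ)+1)) * ((n:ℝ) ^ ((2:ℝ)/((m:ℝ)+1)))⁻¹ := by
    rw [hsdef, ← Real.rpow_natCast (((k:ℝ)/n) ^ ((1:ℝ)/((m:ℝ)+1))) 2,
      ← Real.rpow_mul hknR.le,
      show (1:ℝ)/((m:ℝ)+1) * (2:ℕ) = (2:ℝ)/((m:ℝ)+1) by push_cast; ring,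
      Real.div_rpow (Nat.cast_nonneg k) (Nat.cast_nonneg n), div_eq_mul_inv]
  have hRHS : (k : ℝ) - 8 * (k : ℝ) ^ ((((m+2:ℕ) : ℝ) + 1) / (((m+2:ℕ) : ℝ) - 1)) *
      (n : ℝ) ^ (-(2 : ℝ) / (((m+2:ℕ) : ℝ) - 1)) = (k:ℝ) * c := by
    rw [hd1, show (((m+2:ℕ):ℝ) + 1) = ((m:ℝ)+1) + 2 by push_cast; ring]
    rw [show (((m:ℝ)+1) + 2) / ((m:ℝ)+1) = 1 + (2:ℝ)/((m:ℝ)+1) by field_simp,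
      Real.rpow_add (by positivity : (0:ℝ) < (k:ℝ)), Real.rpow_one,
      show (-(2:ℝ)) / ((m:ℝ)+1) = -((2:ℝ)/((m:ℝ)+1)) by ring,
      Real.rpow_neg (Nat.cast_nonneg n), hcdef, hs2]
    ring
  simp only [hRHS, ge_iff_le]
  by_cases hcpos : 0 < c
  · -- main case
    have hc1 : c < 1 := by
      rw [hcdef]; nlinarith
    have hcs : 1 - c = 8 * s^2 := by rw [hcdef]; ring
    have hsk : (k : ℝ) ≤ n * s ^ (m+1) := by
      rw [hspow]
      field_simp
      exact le_rfl
    obtain ⟨x, hx0, T, hTcard, hT⟩ := exists_heavy_direction m n k (by omega) hkn u hu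
      hcpos hc1 hs0.le hcs hsk
    obtain ⟨T', hT'sub, hT'card⟩ := Finset.exists_subset_card_eq hTcard
    set σ := T'.orderEmbOfFin hT'card with hσ
    set ε : Fin k → ℝ := fun i => if 0 ≤ (inner ℝ (u (σ i)) x : ℝ) then 1 else -1 with hε
    refine ⟨fun i => σ i, ε, fun a b hab => σ.injective hab, ?_, ?_⟩
    · intro i
      by_cases h : 0 ≤ (inner ℝ (u (σ i)) x : ℝ)
      · left; simp only [hε]; rw [if_pos h]
      · right; simp only [hε]; rw [if_neg h]
    · have hxnorm : 0 < ‖x‖ := norm_pos_iff.2 hx0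
      set v := ∑ i, ε i • u (σ i) with hv
      have hterm : ∀ i : Fin k, c * ‖x‖ ≤ ε i * (inner ℝ (u (σ i)) x : ℝ) := by
        intro i
        have hmem : σ i ∈ T := hT'sub (T'.orderEmbOfFin_mem hT'card i)
        have habs := hT _ hmem
        by_cases h : 0 ≤ (inner ℝ (u (σ i)) x : ℝ)
        · rw [hε]; simp only [h, if_pos]
          rw [one_mul]
          rwa [abs_of_nonneg h] at habs
        · rw [hε]; simp only [h, if_neg, not_false_iff]
          rw [neg_one_mul]
          rwa [abs_of_neg (lt_of_not_ge h)] at habs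
      have hinner : (k:ℝ) * (c * ‖x‖) ≤ (inner ℝ v x : ℝ) := by
        rw [hv, sum_inner]
        simp_rw [real_inner_smul_left]
        calc (k:ℝ) * (c * ‖x‖) = ∑ _i : Fin k, c * ‖x‖ := by
              rw [Finset.sum_const, card_univ, Fintype.card_fin, nsmul_eq_mul]
          _ ≤ ∑ i, ε i * (inner ℝ (u (σ i)) x : ℝ) := Finset.sum_le_sum (fun i _ => hterm i)
      have hcs2 := real_inner_le_norm v x
      have : (k:ℝ) * c * ‖x‖ ≤ ‖v‖ * ‖x‖ := by
        calc (k:ℝ) * c * ‖x‖ = (k:ℝ) * (c * ‖x‖) := by ring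
          _ ≤ (inner ℝ v x : ℝ) := hinner
          _ ≤ ‖v‖ * ‖x‖ := hcs2
      exact le_of_mul_le_mul_right this hxnorm
  · -- trivial case : RHS ≤ 0
    refine ⟨Fin.castLE hkn, fun _ => 1, Fin.castLE_injective hkn, fun i => Or.inl rfl, ?_⟩
    have : (k:ℝ) * c ≤ 0 :=
      mul_nonpos_of_nonneg_of_nonpos (Nat.cast_nonneg k) (le_of_not_gt hcpos)
    exact le_trans this (norm_nonneg _)
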